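/- arXiv:1204.0027 — 3 statements merged into one kernel-verified Lean document; each statement's English description precedes it below -/
import Mathlib

section
/- Let μ be a good full non-atomic Borel measure on a non-compact locally compact Cantor set X, and let cX be a compactification of X with μ extended to cX by assigning measure zero to the remainder cX \ X. Then the extension of μ to cX is good if and only if S(μ|_{cX}) ∩ [0, μ(X)) = S(μ|_X). -/
open MeasureTheory Topology ENNReal TopologicalSpace

/-- A set is compact open. -/
def IsCompactOpen {X : Type*} [TopologicalSpace X] (U : Set X) : Prop :=
  IsCompact U ∧ IsOpen U

/-- The defective set of a measure: points all of whose compact open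
neighbourhoods have infinite measure. -/
def DefectiveSet {X : Type*} [TopologicalSpace X] [MeasurableSpace X]
    (μ : Measure X) : Set X :=
  {x | ∀ U : Set X, IsCompactOpen U → x ∈ U → μ U = ⊤}

/-- A compact open set `V` is good for `μ`. -/
def GoodSet {X : Type*} [TopologicalSpace X] [MeasurableSpace X]
    (μ : Measure X) (V : Set X) : Prop :=
  ∀ U : Set X, IsCompactOpen U → μ U < μ V →
    ∃ W : Set X, W ⊆ V ∧ IsCompactOpen W ∧ μ W = μ U

/-- The measure `μ` is good: every compact open set is good for `μ`. -/
def Good {X : Type*} [TopologicalSpace X] [MeasurableSpace X]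
    (μ : Measure X) : Prop :=
  ∀ V : Set X, IsCompactOpen V → GoodSet μ V

/-- The restriction of `μ` to the (open) subset `A` is good: compact open
subsets of the subspace `A` are exactly compact open subsets of `X` contained
in `A`. -/
def GoodOn {X : Type*} [TopologicalSpace X] [MeasurableSpace X]
    (μ : Measure X) (A : Set X) : Prop :=
  ∀ U V : Set X, IsCompactOpen U → U ⊆ A → IsCompactOpen V → V ⊆ A → μ U < μ V →
    ∃ W : Set X, W ⊆ V ∧ IsCompactOpen W ∧ μ W = μ U

/-- The compact open values set, as a set of extended nonnegative reals. -/
def SE {X : Type*} [TopologicalSpace X] [MeasurableSpace X]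
    (μ : Measure X) : Set ℝ≥0∞ :=
  {v | v ≠ ⊤ ∧ ∃ U : Set X, IsCompactOpen U ∧ μ U = v}

/-- The compact open values set of the restriction of `μ` to `A`. -/
def SEOn {X : Type*} [TopologicalSpace X] [MeasurableSpace X]
    (μ : Measure X) (A : Set X) : Set ℝ≥0∞ :=
  {v | v ≠ ⊤ ∧ ∃ U : Set X, IsCompactOpen U ∧ U ⊆ A ∧ μ U = v}

/-- The compact open values set, as a set of reals. -/
def Sreal {X : Type*} [TopologicalSpace X] [MeasurableSpace X]
    (μ : Measure X) : Set ℝ :=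
  {r | ∃ U : Set X, IsCompactOpen U ∧ μ U ≠ ⊤ ∧ (μ U).toReal = r}

/-- The compact open values set of the restriction of `μ` to `A`, as reals. -/
def SrealOn {X : Type*} [TopologicalSpace X] [MeasurableSpace X]
    (μ : Measure X) (A : Set X) : Set ℝ :=
  {r | ∃ U : Set X, IsCompactOpen U ∧ U ⊆ A ∧ μ U ≠ ⊤ ∧ (μ U).toReal = r}

/-- A measure is full if every non-empty open set has positive measure. -/
def IsFull {X : Type*} [TopologicalSpace X] [MeasurableSpace X]
    (μ : Measure X) : Prop :=
  ∀ U : Set X, IsOpen U → U.Nonempty → 0 < μ U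

/-- A measure is non-atomic if every singleton has measure zero. -/
def NonAtomic {X : Type*} [MeasurableSpace X] (μ : Measure X) : Prop :=
  ∀ x : X, μ {x} = 0

/-- The space has a countable basis consisting of compact open sets. -/
def HasCompactOpenBasis (X : Type*) [TopologicalSpace X] : Prop :=
  ∃ B : Set (Set X), B.Countable ∧ TopologicalSpace.IsTopologicalBasis B ∧
    ∀ U ∈ B, IsCompact U ∧ IsOpen U

/-- The space has no isolated points. -/
def NoIsolatedPoints (X : Type*) [TopologicalSpace X] : Prop :=
  ∀ x : X, ¬ IsOpen ({x} : Set X)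


/-- In a compact metrizable totally disconnected space, any open set whose
measure exceeds `a` contains a compact open set of measure exceeding `a`. -/
lemma exists_compactOpen_lt {Y : Type*} [TopologicalSpace Y] [MeasurableSpace Y]
    [BorelSpace Y] [CompactSpace Y] [MetrizableSpace Y] [TotallyDisconnectedSpace Y]
    (μ : Measure Y) (O : Set Y) (hO : IsOpen O) (a : ℝ≥0∞) (ha : a < μ O) :
    ∃ K : Set Y, IsCompactOpen K ∧ K ⊆ O ∧ a < μ K := by
  letI : MetricSpace Y := TopologicalSpace.metrizableSpaceMetric Y
  have hbasis := loc_compact_Haus_tot_disc_of_zero_dim (H := Y)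
  set S : Set (Set Y) := {s | IsClopen s ∧ s ⊆ O} with hSdef
  have hSO : ⋃₀ S = O := by
    apply subset_antisymm
    · exact Set.sUnion_subset fun s hs => hs.2
    · intro x hx
      obtain ⟨s, hsB, hxs, hsO⟩ := hbasis.exists_subset_of_mem_open hx hO
      exact ⟨s, ⟨hsB, hsO⟩, hxs⟩
  obtain ⟨T, hTc, hTS, hTU⟩ :=
    TopologicalSpace.isOpen_sUnion_countable S (fun s hs => hs.1.2)
  rcases T.eq_empty_or_nonempty with hTe | hTne
  · exfalso
    rw [hTe] at hTU
    simp only [Set.sUnion_empty] at hTU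
    rw [hSO] at hTU
    rw [← hTU] at ha
    simp at ha
  obtain ⟨f, hf⟩ := Set.Countable.exists_eq_range hTc hTne
  have hfmem : ∀ n, f n ∈ S := fun n => hTS (hf ▸ Set.mem_range_self n)
  set K : ℕ → Set Y := Set.accumulate f with hK
  have hKO : ∀ n, K n ⊆ O := by
    intro n
    simp only [hK, Set.accumulate_def]
    exact Set.iUnion₂_subset fun i _ => (hfmem i).2
  have hKco : ∀ n, IsCompactOpen (K n) := by
    intro n
    constructor
    · simp only [hK, Set.accumulate_def]
      apply (Set.finite_Iic n).isCompact_biUnion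
      intro i _
      exact (hfmem i).1.1.isCompact
    · simp only [hK, Set.accumulate_def]
      exact isOpen_biUnion fun i _ => (hfmem i).1.2
  have hKU : ⋃ n, K n = O := by
    rw [hK, Set.iUnion_accumulate, ← Set.sUnion_range, ← hf, hTU, hSO]
  have hsup : μ O = ⨆ n, μ (K n) := by
    rw [← hKU]
    exact (Set.monotone_accumulate.directed_le).measure_iUnion
  rw [hsup] at ha
  obtain ⟨n, hn⟩ := lt_iSup_iff.mp ha
  exact ⟨K n, hKco n, hKO n, hn⟩

theorem stmt16 {Y : Type*} [TopologicalSpace Y] [MeasurableSpace Y] [BorelSpace Y]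
    [CompactSpace Y] [MetrizableSpace Y] [TotallyDisconnectedSpace Y]
    (hniY : NoIsolatedPoints Y)
    (X : Set Y) (hXo : IsOpen X) (hXd : Dense X) (hXnc : ¬ IsCompact X)
    (μ : Measure Y) (hrem : μ Xᶜ = 0) (hfull : IsFull μ) (hna : NonAtomic μ)
    (h0 : μ (DefectiveSet μ) = 0) (hgX : GoodOn μ X) :
    Good μ ↔ SE μ ∩ Set.Iio (μ X) = SEOn μ X := by
  constructor
  · intro hg
    apply subset_antisymm
    · rintro v ⟨⟨hvt, U, hUco, hUv⟩, hvlt⟩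
      obtain ⟨V, hVco, hVX, hV⟩ := exists_compactOpen_lt μ X hXo _ hvlt
      obtain ⟨W, hWV, hWco, hWμ⟩ := hg V hVco U hUco (by rw [hUv]; exact hV)
      exact ⟨hvt, W, hWco, hWV.trans hVX, hWμ.trans hUv⟩
    · rintro v ⟨hvt, U, hUco, hUX, hUv⟩
      refine ⟨⟨hvt, U, hUco, hUv⟩, ?_⟩
      subst hUv
      show μ U < μ X
      rcases eq_top_or_lt_top (μ X) with hX | hX
      · rw [hX]; exact lt_top_iff_ne_top.mpr hvt
      · have hne : (X \ U).Nonempty := by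
          rw [Set.diff_nonempty]
          intro hXU
          exact hXnc (Set.Subset.antisymm hXU hUX ▸ hUco.1)
        have hopen : IsOpen (X \ U) := hXo.sdiff hUco.1.isClosed
        have hpos : 0 < μ (X \ U) := hfull _ hopen hne
        have hsplit : μ U + μ (X \ U) ≤ μ X := by
          rw [← measure_union (Set.disjoint_sdiff_right) (hXo.sdiff hUco.1.isClosed).measurableSet]
          exact measure_mono (Set.union_subset hUX Set.diff_subset)
        calc μ U < μ U + μ (X \ U) := ENNReal.lt_add_right hvt hpos.ne'
          _ ≤ μ X := hsplit
  · intro hS V hVco U hUco hUV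
    have hXuniv : μ X = μ Set.univ := by
      refine le_antisymm (measure_mono (Set.subset_univ X)) ?_
      calc μ Set.univ = μ (X ∪ Xᶜ) := by rw [Set.union_compl_self]
        _ ≤ μ X + μ Xᶜ := measure_union_le _ _
        _ = μ X := by rw [hrem, add_zero]
    have hUX : μ U < μ X := lt_of_lt_of_le hUV (hXuniv ▸ measure_mono (Set.subset_univ V))
    have hmem : μ U ∈ SE μ ∩ Set.Iio (μ X) := ⟨⟨hUV.ne_top, U, hUco, rfl⟩, hUX⟩
    rw [hS] at hmem
    obtain ⟨_, U', hU'co, hU'X, hU'μ⟩ := hmem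
    have hVXeq : μ (V ∩ X) = μ V := by
      refine le_antisymm (measure_mono Set.inter_subset_left) ?_
      calc μ V = μ (V ∩ X) + μ (V \ X) := (measure_inter_add_diff V hXo.measurableSet).symm
        _ ≤ μ (V ∩ X) + μ Xᶜ := add_le_add_right (measure_mono fun x hx => hx.2) _
        _ = μ (V ∩ X) := by rw [hrem, add_zero]
    obtain ⟨Vn, hVnco, hVnsub, hVn⟩ :=
      exists_compactOpen_lt μ (V ∩ X) (hVco.2.inter hXo) (μ U) (by rw [hVXeq]; exact hUV)
    obtain ⟨W, hWVn, hWco, hWμ⟩ := hgX U' Vn hU'co hU'X hVnco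
      (hVnsub.trans Set.inter_subset_right) (by rw [hU'μ]; exact hVn)
    exact ⟨W, hWVn.trans (hVnsub.trans Set.inter_subset_left), hWco, hWμ.trans hU'μ⟩
end

section
/- Let X be a non-compact locally compact Cantor set and μ a full non-atomic Borel probability measure on X. If there exists a compactification cX of X (with μ extended so μ(cX \ X) = 0) such that S(μ|_{cX}) = S(μ|_X) ∪ {1}, then 1 belongs to the additive subgroup of ℝ generated by S(μ|_X). -/
open MeasureTheory Topology ENNReal TopologicalSpace

theorem stmt17 {Y : Type*} [TopologicalSpace Y] [MeasurableSpace Y] [BorelSpace Y]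
    [CompactSpace Y] [MetrizableSpace Y] [TotallyDisconnectedSpace Y]
    (hniY : NoIsolatedPoints Y)
    (X : Set Y) (hXo : IsOpen X) (hXd : Dense X) (hXnc : ¬ IsCompact X)
    (μ : Measure Y) [IsProbabilityMeasure μ] (hrem : μ Xᶜ = 0)
    (hfull : IsFull μ) (hna : NonAtomic μ)
    (hS : Sreal μ = SrealOn μ X ∪ {1}) :
    (1 : ℝ) ∈ AddSubgroup.closure (SrealOn μ X) := by
  -- Y is nonempty since X is not compact (the empty set is compact).
  have hXne : X.Nonempty := by
    rcases X.eq_empty_or_nonempty with h | h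
    · exact absurd (h ▸ isCompact_empty) hXnc
    · exact h
  obtain ⟨y, -⟩ := hXne
  -- there is another point z ≠ y, since {y} is not open
  have hz : ∃ z : Y, z ≠ y := by
    by_contra h
    push_neg at h
    have : ({y} : Set Y) = Set.univ := by
      ext w; simp [h w]
    exact hniY y (this ▸ isOpen_univ)
  obtain ⟨z, hzy⟩ := hz
  haveI : TotallySeparatedSpace Y := loc_compact_t2_tot_disc_iff_tot_sep.mp ‹_›
  obtain ⟨U, hUc, hyU, hzU⟩ := exists_isClopen_of_totally_separated (Ne.symm hzy)
  have hUco : IsCompactOpen U := ⟨hUc.1.isCompact, hUc.2⟩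
  have hUcco : IsCompactOpen Uᶜ := ⟨hUc.compl.1.isCompact, hUc.compl.2⟩
  have hUm : MeasurableSet U := hUc.2.measurableSet
  have hsum : μ U + μ Uᶜ = 1 := by
    rw [measure_add_measure_compl hUm]; exact measure_univ
  have hUlt : μ U < 1 := by
    have hpos : 0 < μ Uᶜ := hfull Uᶜ hUc.compl.2 ⟨z, hzU⟩
    by_contra h
    push_neg at h
    have h1 : μ U = 1 := le_antisymm prob_le_one h
    rw [h1] at hsum
    have : μ Uᶜ = 0 :=
      (ENNReal.add_right_inj one_ne_top).mp (by simpa using hsum)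
    exact hpos.ne' this
  have hUclt : μ Uᶜ < 1 := by
    have hpos : 0 < μ U := hfull U hUc.2 ⟨y, hyU⟩
    by_contra h
    push_neg at h
    have h1 : μ Uᶜ = 1 := le_antisymm prob_le_one h
    rw [h1] at hsum
    rw [add_comm] at hsum
    have : μ U = 0 :=
      (ENNReal.add_right_inj one_ne_top).mp (by simpa using hsum)
    exact hpos.ne' this
  have hUnt : μ U ≠ ⊤ := hUlt.ne_top
  have hUcnt : μ Uᶜ ≠ ⊤ := hUclt.ne_top
  set a := (μ U).toReal with ha
  set b := (μ Uᶜ).toReal with hb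
  have hab : a + b = 1 := by
    rw [ha, hb, ← ENNReal.toReal_add hUnt hUcnt, hsum, ENNReal.toReal_one]
  have halt : a < 1 := by
    rw [ha]
    exact (ENNReal.toReal_lt_toReal hUnt one_ne_top).mpr (by simpa using hUlt)
      |>.trans_eq ENNReal.toReal_one
  have hblt : b < 1 := by
    rw [hb]
    exact (ENNReal.toReal_lt_toReal hUcnt one_ne_top).mpr (by simpa using hUclt)
      |>.trans_eq ENNReal.toReal_one
  have haS : a ∈ Sreal μ := ⟨U, hUco, hUnt, rfl⟩
  have hbS : b ∈ Sreal μ := ⟨Uᶜ, hUcco, hUcnt, rfl⟩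
  rw [hS] at haS hbS
  have haX : a ∈ SrealOn μ X := by
    rcases haS with h | h
    · exact h
    · exact absurd (Set.mem_singleton_iff.mp h) halt.ne
  have hbX : b ∈ SrealOn μ X := by
    rcases hbS with h | h
    · exact h
    · exact absurd (Set.mem_singleton_iff.mp h) hblt.ne
  have : a + b ∈ AddSubgroup.closure (SrealOn μ X) :=
    add_mem (AddSubgroup.subset_closure haX) (AddSubgroup.subset_closure hbX)
  rwa [hab] at this
end

section
/- Let μ be a good full non-atomic Borel probability measure on a non-compact locally compact Cantor set X. The extension of μ to the one-point (Alexandroff) compactification ωX (assigning measure zero to the point at infinity) is good if and only if 1 lies in the additive subgroup of ℝ generated by S(μ|_X). -/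
open MeasureTheory Topology ENNReal TopologicalSpace

section AuxReal


theorem listKeyPos (S : Set ℝ) (h0 : (0:ℝ) ∈ S) (hnn : ∀ a ∈ S, 0 ≤ a)
    (hadd : ∀ a ∈ S, ∀ b ∈ S, a + b < 1 → a + b ∈ S) :
    ∀ l : List ℝ, (∀ x ∈ l, x ∈ S) → l.sum < 1 → l.sum ∈ S := by
  intro l
  induction l with
  | nil => intro _ _; simpa using h0
  | cons x t ih =>
    intro hmem hlt
    simp only [List.sum_cons] at hlt ⊢
    have hx : x ∈ S := hmem x (by simp)
    have ht : ∀ y ∈ t, y ∈ S := fun y hy => hmem y (by simp [hy])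
    have htnn : 0 ≤ t.sum := List.sum_nonneg (fun y hy => hnn y (ht y hy))
    have hts : t.sum < 1 := by have := hnn x hx; linarith
    exact hadd x hx t.sum (ih ht hts) hlt

theorem sum_map_neg (l : List ℝ) : (l.map (fun x => -x)).sum = -l.sum := by
  induction l with
  | nil => simp
  | cons a t iht => simp [iht]; ring

theorem listKey (S : Set ℝ) (h0 : (0:ℝ) ∈ S) (hnn : ∀ a ∈ S, 0 ≤ a)
    (hsub : ∀ a ∈ S, ∀ b ∈ S, b ≤ a → a - b ∈ S)
    (hadd : ∀ a ∈ S, ∀ b ∈ S, a + b < 1 → a + b ∈ S) :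
    ∀ n (l : List ℝ), l.length ≤ n → (∀ x ∈ l, x ∈ S ∨ -x ∈ S) →
      0 ≤ l.sum → l.sum < 1 → l.sum ∈ S := by
  intro n
  induction n with
  | zero =>
    intro l hl _ _ _
    have : l = [] := List.eq_nil_of_length_eq_zero (Nat.le_zero.mp hl)
    simpa [this] using h0
  | succ n ih =>
    intro l hl hmem hge hlt
    by_cases hall : ∀ x ∈ l, x ∈ S
    · exact listKeyPos S h0 hnn hadd l hall hlt
    · push_neg at hall
      obtain ⟨b, hbl, hbS⟩ := hall
      have hbS' : -b ∈ S := (hmem b hbl).resolve_left hbS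
      by_cases hall2 : ∀ x ∈ l, -x ∈ S
      · -- all nonpositive, sum = 0
        have hsle : l.sum ≤ 0 := by
          have : 0 ≤ (l.map (fun x => -x)).sum :=
            List.sum_nonneg (by
              intro y hy
              obtain ⟨x, hx, rfl⟩ := List.mem_map.mp hy
              exact hnn _ (hall2 x hx))
          have hmap : (l.map (fun x => -x)).sum = -l.sum := sum_map_neg l
          linarith [hmap ▸ this]
        have : l.sum = 0 := le_antisymm hsle hge
        rw [this]; exact h0
      · push_neg at hall2
        obtain ⟨a, hal, haS'⟩ := hall2
        have haS : a ∈ S := (hmem a hal).resolve_right haS'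
        have hab : a ≠ b := fun h => hbS (h ▸ haS)
        have hbl' : b ∈ l.erase a := (List.mem_erase_of_ne hab.symm).mpr hbl
        have p1 : l.Perm (a :: l.erase a) := List.perm_cons_erase hal
        have p2 : (l.erase a).Perm (b :: (l.erase a).erase b) := List.perm_cons_erase hbl'
        set t := (l.erase a).erase b with ht
        have hsum : l.sum = a + (b + t.sum) := by
          rw [p1.sum_eq]; simp [p2.sum_eq]
        have hlen : l.length = t.length + 2 := by
          rw [p1.length_eq]; simp [p2.length_eq]
        set c := a + b with hc
        have hcmem : c ∈ S ∨ -c ∈ S := by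
          by_cases hc0 : 0 ≤ c
          · left
            have : a - (-b) ∈ S := hsub a haS (-b) hbS' (by simp only [hc] at hc0; linarith)
            simpa [sub_neg_eq_add] using this
          · right
            have : (-b) - a ∈ S := hsub (-b) hbS' a haS (by simp only [hc] at hc0; linarith)
            have h' : (-b) - a = -c := by rw [hc]; ring
            rwa [h'] at this
        have hm : ∀ x ∈ (c :: t), x ∈ S ∨ -x ∈ S := by
          intro x hx
          rcases List.mem_cons.mp hx with rfl | hx
          · exact hcmem
          · exact hmem x (List.mem_of_mem_erase (List.mem_of_mem_erase hx))
        have hms : (c :: t).sum = l.sum := by simp [hsum, hc]; ring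
        have hmlen : (c :: t).length ≤ n := by
          simp only [List.length_cons]
          omega
        have := ih (c :: t) hmlen hm (by rw [hms]; exact hge) (by rw [hms]; exact hlt)
        rwa [hms] at this

theorem groupKey (S : Set ℝ) (h0 : (0:ℝ) ∈ S) (hnn : ∀ a ∈ S, 0 ≤ a)
    (hsub : ∀ a ∈ S, ∀ b ∈ S, b ≤ a → a - b ∈ S)
    (hadd : ∀ a ∈ S, ∀ b ∈ S, a + b < 1 → a + b ∈ S)
    (x : ℝ) (hx : x ∈ AddSubgroup.closure S) (h0x : 0 ≤ x) (hx1 : x < 1) : x ∈ S := by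
  have hx' : x ∈ (AddSubgroup.closure S).toAddSubmonoid := hx
  rw [AddSubgroup.closure_toAddSubmonoid] at hx'
  obtain ⟨l, hlm, hls⟩ := AddSubmonoid.exists_list_of_mem_closure hx'
  have : ∀ y ∈ l, y ∈ S ∨ -y ∈ S := by
    intro y hy
    rcases hlm y hy with h | h
    · exact Or.inl h
    · exact Or.inr (by simpa using h)
  exact hls ▸ listKey S h0 hnn hsub hadd l.length l le_rfl this (hls ▸ h0x) (hls ▸ hx1)

end AuxReal

section AuxTop
open MeasureTheory ENNReal TopologicalSpace Set

variable {X : Type*} [TopologicalSpace X] [MeasurableSpace X] [BorelSpace X]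

theorem isCompactOpen_union {U V : Set X} (hU : IsCompactOpen U) (hV : IsCompactOpen V) :
    IsCompactOpen (U ∪ V) := ⟨hU.1.union hV.1, hU.2.union hV.2⟩

theorem exists_compactOpen_subset_lt (hB : HasCompactOpenBasis X) (μ : Measure X)
    {v : Set X} (hv : IsOpen v) {r : ℝ≥0∞} (hr : r < μ v) :
    ∃ K : Set X, IsCompactOpen K ∧ K ⊆ v ∧ r < μ K := by
  obtain ⟨B, hBc, hBb, hBco⟩ := hB
  set F : Set (Set X) := {s ∈ B | s ⊆ v} with hF
  have hvF : v = ⋃₀ F := hBb.open_eq_sUnion' hv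
  have hf2 : F = {s | s ∈ B ∧ s ⊆ v} := rfl
  rcases F.eq_empty_or_nonempty with hFe | hFn
  · rw [hvF, hFe] at hr; simp at hr
  · obtain ⟨f, hf⟩ := (hBc.mono (sep_subset _ _)).exists_eq_range hFn
    rw [← hf2] at hf
    have hfF : ∀ n, f n ∈ F := by intro n; rw [hf]; exact mem_range_self n
    have hunion : v = ⋃ n, f n := by
      rw [hvF, hf, sUnion_range]
    have hmono : Monotone (fun n => Set.accumulate f n) := monotone_accumulate
    have hiacc : (⋃ n, Set.accumulate f n) = v := by
      rw [iUnion_accumulate, hunion]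
    have hsup : μ v = ⨆ n, μ (Set.accumulate f n) := by
      rw [← hiacc]; exact hmono.measure_iUnion
    rw [hsup] at hr
    obtain ⟨n, hn⟩ := lt_iSup_iff.mp hr
    refine ⟨Set.accumulate f n, ⟨?_, ?_⟩, ?_, hn⟩
    · rw [Set.accumulate_def]
      exact (Set.finite_Iic n).isCompact_biUnion (fun i _ => (hBco _ (hfF i).1).1)
    · rw [Set.accumulate_def]
      exact isOpen_biUnion (fun i _ => (hBco _ (hfF i).1).2)
    · rw [Set.accumulate_def]
      exact iUnion₂_subset (fun i _ => (hfF i).2)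

theorem exists_compactOpen_superset (hB : HasCompactOpenBasis X)
    {C : Set X} (hC : IsCompact C) : ∃ K : Set X, IsCompactOpen K ∧ C ⊆ K := by
  obtain ⟨B, hBc, hBb, hBco⟩ := hB
  have hcover : C ⊆ ⋃ b : B, (b : Set X) := by
    intro x _
    obtain ⟨b, hb, hxb, -⟩ := hBb.exists_subset_of_mem_open (mem_univ x) isOpen_univ
    exact mem_iUnion.mpr ⟨⟨b, hb⟩, hxb⟩
  obtain ⟨t, ht⟩ := hC.elim_finite_subcover (fun b : B => (b : Set X))
    (fun b => (hBco _ b.2).2) hcover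
  refine ⟨⋃ b ∈ t, (b : Set X), ⟨t.finite_toSet.isCompact_biUnion
    (fun b _ => (hBco _ b.2).1), isOpen_biUnion (fun b _ => (hBco _ b.2).2)⟩, ht⟩


end AuxTop

section AuxSreal
open MeasureTheory ENNReal TopologicalSpace Set

section Sreal
variable {X : Type*} [TopologicalSpace X] [MeasurableSpace X] [BorelSpace X] [T2Space X]
  {μ : Measure X} [IsProbabilityMeasure μ]

set_option linter.unusedSectionVars false

theorem sreal_nonneg {a : ℝ} (ha : a ∈ Sreal μ) : 0 ≤ a := by
  obtain ⟨A, -, -, rfl⟩ := ha; exact ENNReal.toReal_nonneg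

theorem sreal_zero : (0:ℝ) ∈ Sreal μ :=
  ⟨∅, ⟨isCompact_empty, isOpen_empty⟩, by simp, by simp⟩

theorem sreal_lt_one [NoncompactSpace X] (hfull : IsFull μ)
    {a : ℝ} (ha : a ∈ Sreal μ) : a < 1 := by
  obtain ⟨A, hA, -, rfl⟩ := ha
  have hAc : (Aᶜ : Set X).Nonempty := nonempty_compl.mpr hA.1.ne_univ
  have hpos : 0 < μ Aᶜ := hfull Aᶜ hA.1.isClosed.isOpen_compl hAc
  have hne : μ A ≠ 1 := by
    intro h
    have := measure_compl hA.2.measurableSet (measure_ne_top μ A)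
    rw [h, measure_univ, tsub_self] at this
    exact hpos.ne' this
  have hlt : μ A < 1 := lt_of_le_of_ne prob_le_one hne
  calc (μ A).toReal < (1 : ℝ≥0∞).toReal :=
        (ENNReal.toReal_lt_toReal (measure_ne_top μ A) one_ne_top).mpr hlt
    _ = 1 := by simp

theorem sreal_diff (hg : Good μ) {a b : ℝ} (ha : a ∈ Sreal μ) (hb : b ∈ Sreal μ)
    (hba : b ≤ a) : a - b ∈ Sreal μ := by
  obtain ⟨A, hA, -, rfl⟩ := ha
  obtain ⟨B, hB', -, rfl⟩ := hb
  by_cases h : μ B = μ A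
  · rw [h]; simpa using sreal_zero
  · have hlt : μ B < μ A :=
      lt_of_le_of_ne ((ENNReal.toReal_le_toReal (measure_ne_top μ B)
        (measure_ne_top μ A)).mp hba) h
    obtain ⟨W, hWA, hWco, hWμ⟩ := hg A hA B hB' hlt
    refine ⟨A \ W, ⟨hA.1.inter_right hWco.2.isClosed_compl,
      hA.2.inter hWco.1.isClosed.isOpen_compl⟩, measure_ne_top μ _, ?_⟩
    rw [measure_diff hWA hWco.2.measurableSet.nullMeasurableSet (measure_ne_top μ W),
      ENNReal.toReal_sub_of_le (hWμ ▸ hlt.le) (measure_ne_top μ A), hWμ]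

theorem sreal_add (hB : HasCompactOpenBasis X) (hg : Good μ) {a b : ℝ}
    (ha : a ∈ Sreal μ) (hb : b ∈ Sreal μ) (hab : a + b < 1) : a + b ∈ Sreal μ := by
  obtain ⟨A, hA, -, rfl⟩ := ha
  obtain ⟨B, hB', -, rfl⟩ := hb
  have hAcm : μ Aᶜ = 1 - μ A := by
    rw [measure_compl hA.2.measurableSet (measure_ne_top μ A), measure_univ]
  have hAct : (μ Aᶜ).toReal = 1 - (μ A).toReal := by
    rw [hAcm, ENNReal.toReal_sub_of_le prob_le_one one_ne_top, ENNReal.toReal_one]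
  have hlt : μ B < μ Aᶜ := by
    rw [← ENNReal.toReal_lt_toReal (measure_ne_top μ B) (measure_ne_top μ Aᶜ), hAct]
    linarith
  obtain ⟨K, hK, hKA, hKlt⟩ :=
    exists_compactOpen_subset_lt hB μ hA.1.isClosed.isOpen_compl hlt
  obtain ⟨D, hDK, hDco, hDμ⟩ := hg K hK B hB' hKlt
  have hdisj : Disjoint A D :=
    Set.disjoint_of_subset_right (hDK.trans hKA) disjoint_compl_right
  refine ⟨A ∪ D, ⟨hA.1.union hDco.1, hA.2.union hDco.2⟩, measure_ne_top μ _, ?_⟩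
  rw [measure_union hdisj hDco.2.measurableSet, ENNReal.toReal_add (measure_ne_top μ A)
    (measure_ne_top μ D), hDμ]

end Sreal


theorem stmt18 {X : Type*} [TopologicalSpace X] [MeasurableSpace X] [BorelSpace X]
    [MetrizableSpace X] [LocallyCompactSpace X] [TotallyDisconnectedSpace X]
    [NoncompactSpace X] (hB : HasCompactOpenBasis X) (hni : NoIsolatedPoints X)
    (μ : Measure X) [IsProbabilityMeasure μ] (hfull : IsFull μ)
    (hna : NonAtomic μ) (hg : Good μ) :
    (∀ U V : Set (OnePoint X), IsCompactOpen U → IsCompactOpen V →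
        μ ((fun x : X => (x : OnePoint X)) ⁻¹' U) <
          μ ((fun x : X => (x : OnePoint X)) ⁻¹' V) →
        ∃ W : Set (OnePoint X), W ⊆ V ∧ IsCompactOpen W ∧
          μ ((fun x : X => (x : OnePoint X)) ⁻¹' W) =
            μ ((fun x : X => (x : OnePoint X)) ⁻¹' U)) ↔
      (1 : ℝ) ∈ AddSubgroup.closure (Sreal μ) := by
  classical
  set c : X → OnePoint X := fun x => (x : OnePoint X) with hc
  have hcoe : c = ((↑) : X → OnePoint X) := rfl
  have hcont : Continuous c := OnePoint.continuous_coe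
  have hemb : Topology.IsInducing c := OnePoint.isOpenEmbedding_coe.toIsEmbedding.isInducing
  have hinj : Function.Injective c := OnePoint.coe_injective
  -- generic facts
  have hrange : ∀ {S : Set (OnePoint X)}, OnePoint.infty ∉ S → S ⊆ Set.range c := by
    intro S hS x hx
    induction x using OnePoint.rec with
    | infty => exact absurd hx hS
    | coe y => exact ⟨y, rfl⟩
  -- compact open not containing ∞ : preimage compact open
  have hco_notmem : ∀ {S : Set (OnePoint X)}, IsCompactOpen S → OnePoint.infty ∉ S →
      IsCompactOpen (c ⁻¹' S) := by
    intro S hS hmem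
    refine ⟨(hemb.isCompact_preimage_iff (hrange hmem)).mpr hS.1, ?_⟩
    exact hS.2.preimage hcont
  -- compact open containing ∞ : complement of preimage compact open
  have hco_mem : ∀ {S : Set (OnePoint X)}, IsCompactOpen S → OnePoint.infty ∈ S →
      IsCompactOpen ((c ⁻¹' S)ᶜ) := by
    intro S hS hmem
    refine ⟨((OnePoint.isOpen_iff_of_mem' hmem).mp hS.2).1, ?_⟩
    have : IsClosed S := hS.1.isClosed
    exact (this.preimage hcont).isOpen_compl
  -- image of compact open is compact open
  have hco_img : ∀ {w : Set X}, IsCompactOpen w → IsCompactOpen (c '' w) := by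
    intro w hw
    exact ⟨hw.1.image hcont, OnePoint.isOpen_image_coe.mpr hw.2⟩
  -- complement of image of compact open is compact open
  have hco_cimg : ∀ {C : Set X}, IsCompactOpen C → IsCompactOpen ((c '' C)ᶜ) := by
    intro C hC
    refine ⟨?_, OnePoint.isOpen_compl_image_coe.mpr ⟨hC.1.isClosed, hC.1⟩⟩
    exact (isClosed_compl_iff.mpr (OnePoint.isOpen_image_coe.mpr hC.2)).isCompact
  have hpre_img : ∀ (w : Set X), c ⁻¹' (c '' w) = w := fun w => preimage_image_eq w hinj
  have hsum : ∀ {s : Set X}, IsOpen s → (μ s).toReal + (μ sᶜ).toReal = 1 := by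
    intro s hs
    have h := measure_add_measure_compl (μ := μ) hs.measurableSet
    rw [measure_univ] at h
    have := congrArg ENNReal.toReal h
    rwa [ENNReal.toReal_add (measure_ne_top μ _) (measure_ne_top μ _), ENNReal.toReal_one] at this
  have hmeq : ∀ {s t : Set X}, (μ s).toReal = (μ t).toReal → μ s = μ t := by
    intro s t h
    exact (ENNReal.toReal_eq_toReal_iff' (measure_ne_top μ s) (measure_ne_top μ t)).mp h
  have hmlt : ∀ {s t : Set X}, μ s < μ t ↔ (μ s).toReal < (μ t).toReal := by
    intro s t
    exact (ENNReal.toReal_lt_toReal (measure_ne_top μ s) (measure_ne_top μ t)).symm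
  constructor
  · -- goodness of extension implies 1 ∈ group
    intro P
    have h2 : (1/2 : ℝ≥0∞) < μ univ := by rw [measure_univ]; norm_num
    obtain ⟨K, hK, -, hKμ⟩ := exists_compactOpen_subset_lt hB μ isOpen_univ h2
    have hKc : (μ Kᶜ).toReal + (μ K).toReal = 1 := by
      have := hsum hK.2; linarith
    have hKhalf : (1/2 : ℝ) < (μ K).toReal := by
      have := (ENNReal.toReal_lt_toReal (by norm_num) (measure_ne_top μ K)).mpr hKμ
      simpa using this
    have hpreV : c ⁻¹' (c '' K) = K := hpre_img K
    have hpreU : c ⁻¹' ((c '' K)ᶜ) = Kᶜ := by rw [preimage_compl, hpreV]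
    have hltKK : μ (c ⁻¹' ((c '' K)ᶜ)) < μ (c ⁻¹' (c '' K)) := by
      rw [hpreU, hpreV, hmlt]; linarith
    obtain ⟨W, hWV, hWco, hWμ⟩ := P ((c '' K)ᶜ) (c '' K) (hco_cimg hK) (hco_img hK) hltKK
    have hWinf : OnePoint.infty ∉ W := fun h => OnePoint.infty_notMem_image_coe (hWV h)
    have hw : IsCompactOpen (c ⁻¹' W) := hco_notmem hWco hWinf
    rw [hpreU] at hWμ
    have hmem1 : (μ (c ⁻¹' W)).toReal ∈ Sreal μ := ⟨c ⁻¹' W, hw, measure_ne_top μ _, rfl⟩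
    have hmem2 : (μ K).toReal ∈ Sreal μ := ⟨K, hK, measure_ne_top μ _, rfl⟩
    have : (1:ℝ) = (μ (c ⁻¹' W)).toReal + (μ K).toReal := by
      rw [hWμ]; linarith
    rw [this]
    exact AddSubgroup.add_mem _ (AddSubgroup.subset_closure hmem1)
      (AddSubgroup.subset_closure hmem2)
  · -- 1 ∈ group implies goodness of extension
    intro h1G U V hU hV hlt
    set u : Set X := c ⁻¹' U with hu
    set v : Set X := c ⁻¹' V with hv
    have hu_open : IsOpen u := hU.2.preimage hcont
    have hv_open : IsOpen v := hV.2.preimage hcont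
    -- a compact open set of X with the same measure as u
    have hexA : ∃ A₀ : Set X, IsCompactOpen A₀ ∧ μ A₀ = μ u := by
      by_cases hUi : OnePoint.infty ∈ U
      · have hA : IsCompactOpen (uᶜ) := hco_mem hU hUi
        have huu : u ≠ univ := by
          intro h
          rw [h, measure_univ] at hlt
          exact absurd (lt_of_lt_of_le hlt prob_le_one) (lt_irrefl 1)
        have hucne : (uᶜ).Nonempty := nonempty_compl.mpr huu
        have hucpos : 0 < μ (uᶜ) := hfull _ hA.2 hucne
        set s : ℝ := (μ (uᶜ)).toReal with hs
        have hsS : s ∈ Sreal μ := ⟨uᶜ, hA, measure_ne_top μ _, rfl⟩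
        have hspos : 0 < s := ENNReal.toReal_pos hucpos.ne' (measure_ne_top μ _)
        have hsle : s ≤ 1 := by
          have := hsum hu_open; have := ENNReal.toReal_nonneg (a := μ u); linarith
        have hγG : (1 - s : ℝ) ∈ AddSubgroup.closure (Sreal μ) :=
          AddSubgroup.sub_mem _ h1G (AddSubgroup.subset_closure hsS)
        have hγS : (1 - s : ℝ) ∈ Sreal μ :=
          groupKey (Sreal μ) sreal_zero (fun a ha => sreal_nonneg ha)
            (fun a ha b hb h => sreal_diff hg ha hb h)
            (fun a ha b hb h => sreal_add hB hg ha hb h)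
            (1 - s) hγG (by linarith) (by linarith)
        obtain ⟨A₀, hA₀, -, hA₀μ⟩ := hγS
        refine ⟨A₀, hA₀, hmeq ?_⟩
        have := hsum hu_open
        rw [hA₀μ]; linarith
      · exact ⟨u, hco_notmem hU hUi, rfl⟩
    obtain ⟨A₀, hA₀, hA₀μ⟩ := hexA
    have hA₀lt : μ A₀ < μ v := lt_of_le_of_lt hA₀μ.le hlt
    obtain ⟨K, hKco, hKv, hKlt⟩ := exists_compactOpen_subset_lt hB μ hv_open hA₀lt
    obtain ⟨w, hwK, hwco, hwμ⟩ := hg K hKco A₀ hA₀ hKlt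
    refine ⟨c '' w, (image_mono (hwK.trans hKv)).trans (image_preimage_subset c V),
      hco_img hwco, ?_⟩
    rw [show (fun x : X => (x : OnePoint X)) ⁻¹' (c '' w) = w from hpre_img w, hwμ]
    exact hA₀μ
end AuxSreal
end
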